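/- Suppose (G, σ) is a signed bipartite graph with bipartition (A, B) and σ₁, ..., σ₆ are pairwise switching-equivalent signatures on G, all equivalent to σ, whose negative edge sets E₁, ..., E₆ are pairwise disjoint. Then the graph G' obtained from G by contracting all edges of E₁ (keeping all other edges, possibly creating parallel edges) has no loops and no odd cycle of length less than 5. -/

import Mathlib

lemma walk_parity {V : Type} {H : SimpleGraph V} (f : V → Bool)
    (hf : ∀ a b, H.Adj a b → f a ≠ f b) :
    ∀ {x y : V} (w : H.Walk x y), f y = (f x).xor (w.length % 2 == 1) := by
  intro x y w
  induction w with
  | nil => simp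
  | @cons x b y h p ih =>
    have hb : f b = ! f x := by
      have := hf _ _ h
      cases hx : f x <;> cases hy : f b <;> simp_all
    rw [SimpleGraph.Walk.length_cons, ih, hb]
    rcases Nat.mod_two_eq_zero_or_one p.length with h2 | h2
    · have h3 : (p.length + 1) % 2 = 1 := by omega
      rw [h2, h3]; cases f x <;> rfl
    · have h3 : (p.length + 1) % 2 = 0 := by omega
      rw [h2, h3]; cases f x <;> rfl

lemma bool_comb (x a b c d : Bool) :
    Bool.xor (Bool.xor x (Bool.xor a b)) (Bool.xor (Bool.xor a c) (Bool.xor b d))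
      = Bool.xor x (Bool.xor c d) := by
  cases x <;> cases a <;> cases b <;> cases c <;> cases d <;> rfl

lemma bool_cycle (fa fb fc p1 p2 p3 p4 p5 p6 : Bool) :
    Bool.xor (Bool.xor (Bool.xor fa p1) (Bool.xor fb p2))
      (Bool.xor (Bool.xor (Bool.xor fb p3) (Bool.xor fc p4))
        (Bool.xor (Bool.xor fa p5) (Bool.xor fc p6)))
      = Bool.xor p1 (Bool.xor p2 (Bool.xor p3 (Bool.xor p4 (Bool.xor p5 p6)))) := by
  cases fa <;> cases fb <;> cases fc <;> cases p1 <;> cases p2 <;> cases p3 <;>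
    cases p4 <;> cases p5 <;> cases p6 <;> rfl

/-- `σ` and `τ` are switching equivalent signatures on the graph `G`:
`τ` is obtained from `σ` by switching at the set of vertices where `sw` is `true`
(the sign of an edge flips exactly when its endpoints get different values of `sw`). -/
def SwEquiv {V : Type} (G : SimpleGraph V) (σ τ : Sym2 V → Bool) : Prop :=
  ∃ sw : V → Bool, ∀ u v : V, G.Adj u v →
    τ s(u, v) = Bool.xor (σ s(u, v)) (Bool.xor (sw u) (sw v))

/-- The spanning subgraph of `G` consisting of the edges that are negative under `σ`. -/
def negSub {V : Type} (G : SimpleGraph V) (σ : Sym2 V → Bool) : SimpleGraph V where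
  Adj u v := G.Adj u v ∧ σ s(u, v) = false
  symm := ⟨by
    rintro u v ⟨h, hs⟩
    exact ⟨h.symm, by rwa [Sym2.eq_swap]⟩⟩
  loopless := ⟨fun v h => G.loopless.irrefl v h.1⟩

/-- Adjacency in the graph obtained from `G` by contracting all edges that are
negative under `σ` (and keeping all other edges): two contracted classes are adjacent
via a `σ`-positive edge of `G`.  `x` and `y` represent their classes, i.e. their
connected components in the graph of negative edges. -/
def contAdj {V : Type} (G : SimpleGraph V) (σ : Sym2 V → Bool) (x y : V) : Prop :=
  ∃ u v, G.Adj u v ∧ σ s(u, v) = true ∧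
    (negSub G σ).Reachable x u ∧ (negSub G σ).Reachable y v


theorem contraction_no_short_odd_cycles {V : Type} (G : SimpleGraph V)
    (σ : Sym2 V → Bool) (τ : Fin 6 → Sym2 V → Bool)
    (hbip : ∃ c : V → Bool, ∀ u v, G.Adj u v → c u ≠ c v)
    (hequiv : ∀ i, SwEquiv G σ (τ i))
    (hdisj : ∀ i j, i ≠ j → ∀ e ∈ G.edgeSet, ¬(τ i e = false ∧ τ j e = false)) :
    (∀ x, ¬ contAdj G (τ 0) x x) ∧
    ¬ ∃ a b c : V, contAdj G (τ 0) a b ∧ contAdj G (τ 0) b c ∧ contAdj G (τ 0) a c := by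
  classical
  obtain ⟨c, hc⟩ := hbip
  choose sw hsw using hequiv
  set s : Fin 6 → V → Bool := fun i v => Bool.xor (sw 0 v) (sw i v) with hs_def
  -- τ i relative to τ 0
  have hrel : ∀ (i : Fin 6) (u v : V), G.Adj u v →
      τ i s(u, v) = Bool.xor (τ 0 s(u, v)) (Bool.xor (s i u) (s i v)) := by
    intro i u v huv
    rw [hsw i u v huv, hsw 0 u v huv, hs_def]
    exact (bool_comb (σ s(u,v)) (sw 0 u) (sw 0 v) (sw i u) (sw i v)).symm
  -- flip property of s i (i ≠ 0) along negative edges of τ 0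
  have hflip : ∀ (i : Fin 6), i ≠ 0 → ∀ a b : V, (negSub G (τ 0)).Adj a b →
      s i a ≠ s i b := by
    intro i hi a b hab heq
    have hG : G.Adj a b := hab.1
    have hneg : τ 0 s(a, b) = false := hab.2
    have : τ i s(a, b) = false := by
      rw [hrel i a b hG, hneg, heq]
      cases s i b <;> rfl
    exact hdisj i 0 hi s(a, b) (G.mem_edgeSet.mpr hG) ⟨this, hneg⟩
  have hcflip : ∀ a b : V, (negSub G (τ 0)).Adj a b → c a ≠ c b :=
    fun a b hab => hc a b hab.1
  constructor
  · -- no loops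
    rintro x ⟨u, v, hadj, hpos, hru, hrv⟩
    obtain ⟨w⟩ := hru.symm.trans hrv
    set p : Bool := (w.length % 2 == 1) with hp
    have hcw : c v = (c u).xor p := walk_parity c hcflip w
    have hpt : p = true := by
      by_contra h
      have hp0 : p = false := by revert h; cases p <;> simp
      rw [hp0, Bool.xor_false] at hcw
      exact hc u v hadj hcw.symm
    have hone : ∀ (i : Fin 6), i ≠ 0 → τ i s(u, v) = false := by
      intro i hi
      have hsi : s i v = (s i u).xor p := walk_parity (s i) (hflip i hi) w
      rw [hrel i u v hadj, hpos, hsi, hpt]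
      cases s i u <;> rfl
    exact hdisj 1 2 (by decide) s(u, v) (G.mem_edgeSet.mpr hadj)
      ⟨hone 1 (by decide), hone 2 (by decide)⟩
  · -- no triangles
    rintro ⟨a, b, d, ⟨u1, v1, h1, hp1, hra1, hrb1⟩, ⟨u2, v2, h2, hp2, hrb2, hrd2⟩,
      ⟨u3, v3, h3, hp3, hra3, hrd3⟩⟩
    obtain ⟨w1⟩ := hra1
    obtain ⟨w2⟩ := hrb1
    obtain ⟨w3⟩ := hrb2
    obtain ⟨w4⟩ := hrd2
    obtain ⟨w5⟩ := hra3
    obtain ⟨w6⟩ := hrd3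
    set P : Bool := Bool.xor (w1.length % 2 == 1) (Bool.xor (w2.length % 2 == 1)
      (Bool.xor (w3.length % 2 == 1) (Bool.xor (w4.length % 2 == 1)
        (Bool.xor (w5.length % 2 == 1) (w6.length % 2 == 1))))) with hP
    have key : ∀ f : V → Bool, (∀ x y : V, (negSub G (τ 0)).Adj x y → f x ≠ f y) →
        Bool.xor (Bool.xor (f u1) (f v1))
          (Bool.xor (Bool.xor (f u2) (f v2)) (Bool.xor (f u3) (f v3))) = P := by
      intro f hf
      rw [walk_parity f hf w1, walk_parity f hf w2, walk_parity f hf w3,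
        walk_parity f hf w4, walk_parity f hf w5, walk_parity f hf w6, hP]
      exact bool_cycle _ _ _ _ _ _ _ _ _
    have hPc : P = true := by
      rw [← key c hcflip]
      have bne : ∀ x y : Bool, x ≠ y → y = !x := by decide
      rw [bne _ _ (hc u1 v1 h1), bne _ _ (hc u2 v2 h2), bne _ _ (hc u3 v3 h3)]
      cases c u1 <;> cases c u2 <;> cases c u3 <;> rfl
    -- the three positive edges
    set E : Fin 3 → Sym2 V := ![s(u1, v1), s(u2, v2), s(u3, v3)] with hE
    have hEmem : ∀ k, E k ∈ G.edgeSet := by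
      intro k
      fin_cases k <;> simp [hE] <;> assumption
    have hchoice : ∀ i : Fin 5, ∃ k : Fin 3, τ i.succ (E k) = false := by
      intro i
      have hi : i.succ ≠ 0 := Fin.succ_ne_zero i
      have hkey := key (s i.succ) (hflip i.succ hi)
      rw [hPc] at hkey
      have t1 : Bool.xor (s i.succ u1) (s i.succ v1) = true ∨
          Bool.xor (s i.succ u2) (s i.succ v2) = true ∨
          Bool.xor (s i.succ u3) (s i.succ v3) = true := by
        by_contra hcon
        push_neg at hcon
        simp only [Bool.not_eq_true] at hcon
        rw [hcon.1, hcon.2.1, hcon.2.2] at hkey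
        simp at hkey
      rcases t1 with ht | ht | ht
      · exact ⟨0, by rw [show E 0 = s(u1, v1) by simp [hE], hrel i.succ u1 v1 h1, hp1, ht]; rfl⟩
      · exact ⟨1, by rw [show E 1 = s(u2, v2) by simp [hE], hrel i.succ u2 v2 h2, hp2, ht]; rfl⟩
      · exact ⟨2, by rw [show E 2 = s(u3, v3) by simp [hE], hrel i.succ u3 v3 h3, hp3, ht]; rfl⟩
    choose g hg using hchoice
    obtain ⟨i, j, hij, hgij⟩ := Fintype.exists_ne_map_eq_of_card_lt g (by simp)
    have hne : i.succ ≠ j.succ := fun h => hij (Fin.succ_injective _ h)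
    exact hdisj i.succ j.succ hne (E (g i)) (hEmem (g i)) ⟨hg i, by rw [hgij]; exact hg j⟩
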